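/- Let (B, Θ) be a category with nullhomotopies and (N(g), n_g, ν_g) a strong homotopy kernel of g : X → Y. If g is an isomorphism, then the object N(g) is Θ-trivial, i.e. Θ(id_{N(g)}) is nonempty. -/
import Mathlib


open CategoryTheory

universe w v u

/-- A structure of nullhomotopies on a category `B`: a set of nullhomotopies on each arrow,
together with associative and unital pre- and post-composition actions. -/
structure NullStruct (B : Type u) [Category.{v} B] where
  null : ∀ {X Y : B}, (X ⟶ Y) → Type w
  pre : ∀ {W X Y : B} (f : W ⟶ X) {g : X ⟶ Y}, null g → null (f ≫ g)
  post : ∀ {X Y Z : B} {g : X ⟶ Y} (h : Y ⟶ Z), null g → null (g ≫ h)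
  pre_pre : ∀ {V W X Y : B} (f' : V ⟶ W) (f : W ⟶ X) {g : X ⟶ Y} (φ : null g),
    HEq (pre (f' ≫ f) φ) (pre f' (pre f φ))
  post_post : ∀ {X Y Z Z' : B} {g : X ⟶ Y} (h : Y ⟶ Z) (h' : Z ⟶ Z') (φ : null g),
    HEq (post (h ≫ h') φ) (post h' (post h φ))
  pre_post : ∀ {W X Y Z : B} (f : W ⟶ X) {g : X ⟶ Y} (h : Y ⟶ Z) (φ : null g),
    HEq (pre f (post h φ)) (post h (pre f φ))
  pre_id : ∀ {X Y : B} {g : X ⟶ Y} (φ : null g), HEq (pre (𝟙 X) φ) φ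
  post_id : ∀ {X Y : B} {g : X ⟶ Y} (φ : null g), HEq (post (𝟙 Y) φ) φ

variable {B : Type u} [Category.{v} B]

/-- `(N, n, ν)` is a homotopy kernel of `g` with respect to `Θ`. -/
def IsHKernel (Θ : NullStruct.{w} B) {N X Y : B} (g : X ⟶ Y) (n : N ⟶ X)
    (ν : Θ.null (n ≫ g)) : Prop :=
  ∀ {W : B} (f : W ⟶ X) (φ : Θ.null (f ≫ g)),
    ∃! f' : W ⟶ N, f' ≫ n = f ∧ HEq (Θ.pre f' ν) φ

/-- `(Q, q, θ)` is a homotopy cokernel of `g` with respect to `Θ`. -/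
def IsHCokernel (Θ : NullStruct.{w} B) {X Y Q : B} (g : X ⟶ Y) (q : Y ⟶ Q)
    (θ : Θ.null (g ≫ q)) : Prop :=
  ∀ {W : B} (h : Y ⟶ W) (ψ : Θ.null (g ≫ h)),
    ∃! h' : Q ⟶ W, q ≫ h' = h ∧ HEq (Θ.post h' θ) ψ

/-- `T` is `Θ`-orthogonal to `F`: each `Θ(h)` is a singleton for `h : T ⟶ F`. -/
def NullOrth (Θ : NullStruct.{w} B) (T F : B) : Prop :=
  ∀ h : T ⟶ F, Nonempty (Θ.null h) ∧ Subsingleton (Θ.null h)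

/-- A homotopy torsion theory with respect to a structure of nullhomotopies `Θ`. -/
structure HTorsionTheory (Θ : NullStruct.{w} B) where
  T : Set B
  F : Set B
  repleteT : ∀ {X Y : B}, (X ≅ Y) → X ∈ T → Y ∈ T
  repleteF : ∀ {X Y : B}, (X ≅ Y) → X ∈ F → Y ∈ F
  pres : ∀ X : B, ∃ (TX FX : B) (t : TX ⟶ X) (f : X ⟶ FX) (ξ : Θ.null (t ≫ f)),
    TX ∈ T ∧ FX ∈ F ∧ IsHKernel Θ f t ξ ∧ IsHCokernel Θ t f ξ
  orth : ∀ {t f : B}, t ∈ T → f ∈ F → NullOrth Θ t f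

/-- `(N, n, ν)` is a strong homotopy kernel of `g` with respect to `Θ`. -/
def IsStrongHKernel (Θ : NullStruct.{w} B) {N X Y : B} (g : X ⟶ Y) (n : N ⟶ X)
    (ν : Θ.null (n ≫ g)) : Prop :=
  IsHKernel Θ g n ν ∧
    ∀ {W : B} (f : W ⟶ N) (φ : Θ.null (f ≫ n)),
      HEq (Θ.post g φ) (Θ.pre f ν) → ∃! φ' : Θ.null f, Θ.post n φ' = φ

/-- If `(N, n, ν)` is a strong homotopy kernel of an isomorphism `g`, then `N` is `Θ`-trivial. -/
lemma post_congr (Θ : NullStruct.{w} B) {X Y Z : B} {f f' : X ⟶ Y} (h : f = f')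
    (g : Y ⟶ Z) {χ : Θ.null f} {χ' : Θ.null f'} (hχ : HEq χ χ') :
    HEq (Θ.post g χ) (Θ.post g χ') := by
  subst h; cases hχ; rfl

theorem stmt8 (Θ : NullStruct.{w} B) {N X Y : B} (g : X ⟶ Y) (n : N ⟶ X)
    (ν : Θ.null (n ≫ g)) (hker : IsStrongHKernel Θ g n ν) [IsIso g] :
    Nonempty (Θ.null (𝟙 N)) := by
  have harr : (n ≫ g) ≫ inv g = 𝟙 N ≫ n := by simp
  let φ0 : Θ.null ((n ≫ g) ≫ inv g) := Θ.post (inv g) ν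
  let φ : Θ.null (𝟙 N ≫ n) := cast (congrArg Θ.null harr) φ0
  have hφ : HEq φ φ0 := cast_heq _ _
  have key : HEq (Θ.post g φ) (Θ.pre (𝟙 N) ν) := by
    refine HEq.trans (post_congr Θ harr.symm g hφ) ?_
    refine HEq.trans (Θ.post_post (inv g) g ν).symm ?_
    have hi : inv g ≫ g = 𝟙 Y := by simp
    refine HEq.trans ?_ (Θ.pre_id ν).symm
    rw [hi]
    exact Θ.post_id ν
  obtain ⟨φ', _, _⟩ := hker.2 (𝟙 N) φ key
  exact ⟨φ'⟩
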